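/- Let ε ∈ (0, 1/6) and let B : [0,1] → ℝ be continuous with sup_{s ∈ [0,1]} |B_s| < ε. Suppose X : [0,1] → ℝ is continuous, nonnegative, with X_0 = 0, satisfying X_t = ∫_0^t 1_{X_s > 0} ((1 − X_s)/(1 − s) + 1/X_s) ds + B_t for all t ∈ [0,1). Then sup_{t ∈ [0,1]} X_t < 2. -/
import Mathlib


open Set MeasureTheory

/-- A continuous nonnegative path solving the Bessel-bridge equation from `0`
to `1` on `[0,1)`, driven by a path `B` with `sup |B| < ε < 1/6`, stays
strictly below `2` on all of `[0,1]`. -/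
theorem stmt5 (ε : ℝ) (hε : ε ∈ Ioo (0:ℝ) (1/6)) (B X : ℝ → ℝ)
    (hB : ContinuousOn B (Icc 0 1)) (hB0 : B 0 = 0)
    (hBsmall : ∀ s ∈ Icc (0:ℝ) 1, |B s| < ε)
    (hX : ContinuousOn X (Icc 0 1)) (hX0 : X 0 = 0)
    (hXnonneg : ∀ t ∈ Icc (0:ℝ) 1, 0 ≤ X t)
    (hint : ∀ t ∈ Ico (0:ℝ) 1,
      IntegrableOn
        (fun s => Set.indicator {s : ℝ | 0 < X s}
          (fun s => (1 - X s) / (1 - s) + 1 / X s) s) (Icc 0 t))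
    (heq : ∀ t ∈ Ico (0:ℝ) 1,
      X t = (∫ s in (0:ℝ)..t,
        Set.indicator {s : ℝ | 0 < X s}
          (fun s => (1 - X s) / (1 - s) + 1 / X s) s) + B t) :
    ∀ t ∈ Icc (0:ℝ) 1, X t < 2 := by
  obtain ⟨hε0, hε6⟩ := hε
  set f : ℝ → ℝ := fun s => Set.indicator {s : ℝ | 0 < X s}
      (fun s => (1 - X s) / (1 - s) + 1 / X s) s with hf
  have key : ∀ t ∈ Ico (0:ℝ) 1, X t ≤ 5/3 + 2*ε := by
    intro t ht
    obtain ⟨ht0, ht1⟩ := ht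
    by_contra hcon
    push_neg at hcon
    set S : Set ℝ := Icc 0 t ∩ {s | X s ≤ 5/3} with hS
    have h0S : (0:ℝ) ∈ S := ⟨⟨le_refl 0, ht0⟩, by simp only [mem_setOf_eq, hX0]; norm_num⟩
    have hSne : S.Nonempty := ⟨0, h0S⟩
    have hSbdd : BddAbove S := ⟨t, fun x hx => hx.1.2⟩
    have hSclosed : IsClosed S := by
      have hc : ContinuousOn X (Icc 0 t) := hX.mono (Icc_subset_Icc le_rfl ht1.le)
      exact hc.preimage_isClosed_of_isClosed isClosed_Icc isClosed_Iic
    set u := sSup S with hu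
    have huS : u ∈ S := hSclosed.csSup_mem hSne hSbdd
    have hu0 : (0:ℝ) ≤ u := le_csSup hSbdd h0S
    have hut : u ≤ t := csSup_le hSne (fun x hx => hx.1.2)
    have hXu : X u ≤ 5/3 := huS.2
    have hut' : u < t := lt_of_le_of_ne hut (fun h => by rw [h] at hXu; linarith)
    have habove : ∀ s ∈ Ioc u t, 5/3 < X s := by
      intro s hs
      by_contra h
      push_neg at h
      have hsS : s ∈ S := ⟨⟨le_trans hu0 hs.1.le, hs.2⟩, h⟩
      exact absurd (le_csSup hSbdd hsS) (not_le.mpr hs.1)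
    have hInt : IntegrableOn f (Icc 0 t) := hint t ⟨ht0, ht1⟩
    have hI1 : IntervalIntegrable f volume 0 u :=
      (hInt.mono_set (by rw [uIcc_of_le hu0]; exact Icc_subset_Icc le_rfl hut)).intervalIntegrable
    have hI2 : IntervalIntegrable f volume u t :=
      (hInt.mono_set (by rw [uIcc_of_le hut]; exact Icc_subset_Icc hu0 le_rfl)).intervalIntegrable
    have hsplit : (∫ s in (0:ℝ)..t, f s) = (∫ s in (0:ℝ)..u, f s) + ∫ s in u..t, f s :=
      (intervalIntegral.integral_add_adjacent_intervals hI1 hI2).symm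
    have hneg : (∫ s in u..t, f s) ≤ 0 := by
      rw [intervalIntegral.integral_of_le hut'.le]
      apply setIntegral_nonpos measurableSet_Ioc
      intro s hs
      have hXs := habove s hs
      have hXpos : 0 < X s := by linarith
      have hmem : s ∈ {s : ℝ | 0 < X s} := hXpos
      simp only [hf, Set.indicator_of_mem hmem]
      have hs0 : (0:ℝ) ≤ s := le_trans hu0 hs.1.le
      have hd : 0 < 1 - s := by have := hs.2; linarith
      have k1 : (1 - X s) / (1 - s) ≤ 1 - X s := by
        rw [div_le_iff₀ hd]
        nlinarith [mul_nonneg hs0 (by linarith : (0:ℝ) ≤ X s - 1)]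
      have k2 : 1 / X s ≤ 3/5 := by
        rw [div_le_iff₀ hXpos]; linarith
      linarith
    have heqt := heq t ⟨ht0, ht1⟩
    have hequ := heq u ⟨hu0, lt_of_le_of_lt hut ht1⟩
    have hBt := hBsmall t ⟨ht0, ht1.le⟩
    have hBu := hBsmall u ⟨hu0, le_trans hut ht1.le⟩
    rw [abs_lt] at hBt hBu
    have hIu : (∫ s in (0:ℝ)..u, f s) = X u - B u := by rw [hequ]; ring
    have : X t ≤ 5/3 + 2*ε := by
      rw [heqt, hsplit, hIu]; linarith
    linarith
  intro t ht
  rcases lt_or_eq_of_le ht.2 with h | h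
  · have := key t ⟨ht.1, h⟩; linarith
  · subst h
    have hcl : (1:ℝ) ∈ closure (Ico (0:ℝ) 1) := by
      rw [closure_Ico (by norm_num : (0:ℝ) ≠ 1)]
      exact ⟨by norm_num, le_rfl⟩
    haveI hne : (nhdsWithin (1:ℝ) (Ico (0:ℝ) 1)).NeBot :=
      mem_closure_iff_nhdsWithin_neBot.mp hcl
    have htend : Filter.Tendsto X (nhdsWithin (1:ℝ) (Ico (0:ℝ) 1)) (nhds (X 1)) :=
      ((hX 1 (by norm_num)).mono Ico_subset_Icc_self)
    have hlim : X 1 ≤ 5/3 + 2*ε :=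
      le_of_tendsto htend (eventually_nhdsWithin_of_forall key)
    linarith
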